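/- Let m > ρ ≥ 2 and let α be an independent classification aggregation function satisfying generalized unanimity with permutation π (i.e., α(c,...,c) = π ∘ c for all classifications c). Then for every category p ∈ P and every object x ∈ X there exists an individual d ∈ N such that for every profile c ∈ 𝒞^N with c_d(x) = p, one has α(c)(x) = π(p). -/

import Mathlib

/-- A classification: a surjective mapping from objects `X` to categories `P`. -/
abbrev Classif (X P : Type) : Type := {c : X → P // Function.Surjective c}

/-- A profile of classifications, one per individual in `Fin n`. -/
abbrev Profile (n : ℕ) (X P : Type) : Type := Fin n → Classif X P

/-- A CAF is independent if the aggregate category of an object only depends on the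
categories the individuals put that object in. -/
def Independent {n : ℕ} {X P : Type} (α : Profile n X P → Classif X P) : Prop :=
  ∀ (x : X) (c c' : Profile n X P),
    (∀ i, (c i).1 x = (c' i).1 x) → (α c).1 x = (α c').1 x

/-- A CAF is citizen sovereign if any object can be classified in any category. -/
def CitizenSovereign {n : ℕ} {X P : Type} (α : Profile n X P → Classif X P) : Prop :=
  ∀ (x : X) (p : P), ∃ c : Profile n X P, (α c).1 x = p

/-- A CAF is unanimous if it maps every constant profile `(c, …, c)` to `c`. -/
def Unanimous {n : ℕ} {X P : Type} (α : Profile n X P → Classif X P) : Prop :=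
  ∀ c : Classif X P, (α (fun _ => c)).1 = c.1

/-- A CAF satisfies generalized unanimity if there is a permutation `π` of `P` with
`α(c, …, c) = π ∘ c` for every classification `c`. -/
def GeneralizedUnanimity {n : ℕ} {X P : Type} (α : Profile n X P → Classif X P) : Prop :=
  ∃ π : Equiv.Perm P, ∀ c : Classif X P, (α (fun _ => c)).1 = π ∘ c.1

/-- A CAF is essentially a dictatorship if there are an individual `d` and a permutation
`π` of `P` such that `α(c) = π ∘ c_d` for every profile `c`. -/
def EssentiallyDictatorship {n : ℕ} {X P : Type} (α : Profile n X P → Classif X P) : Prop :=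
  ∃ (d : Fin n) (π : Equiv.Perm P), ∀ c : Profile n X P, (α c).1 = π ∘ (c d).1

/-- A CAF is a dictatorship if there is an individual `d` such that `α(c) = c_d`
for every profile `c`. -/
def Dictatorship {n : ℕ} {X P : Type} (α : Profile n X P → Classif X P) : Prop :=
  ∃ d : Fin n, ∀ c : Profile n X P, (α c).1 = (c d).1

/-- **Claim (2) of Lemma 2.** For an independent CAF satisfying generalized unanimity
with permutation `π`: for every category `p` and object `x` there is an individual `d`
such that whenever `c_d(x) = p`, one has `α(c)(x) = π p`. -/

lemma exists_sigma {X P : Type} [Fintype X] [Fintype P] (A : Finset X) (L R : Finset P)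
    (hRL : R ⊆ L) (hL : L.Nonempty) (hcard : R.card + A.card ≤ Fintype.card X) :
    ∃ σ : X → P, (∀ z, z ∉ A → σ z ∈ L) ∧ (∀ r ∈ R, ∃ z, z ∉ A ∧ σ z = r) := by
  classical
  have hAc : R.card ≤ Aᶜ.card := by
    have h1 := Finset.card_compl A
    have h2 := Finset.card_le_univ A
    omega
  have hcc : Fintype.card {r // r ∈ R} ≤ Fintype.card {z // z ∈ Aᶜ} := by
    rw [Fintype.card_coe, Fintype.card_coe]; exact hAc
  obtain ⟨g⟩ := Function.Embedding.nonempty_of_card_le hcc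
  obtain ⟨l0, hl0⟩ := hL
  refine ⟨fun z => if h : ∃ r : {r // r ∈ R}, ((g r : {z // z ∈ Aᶜ}) : X) = z
      then (h.choose : {r // r ∈ R}).1 else l0, ?_, ?_⟩
  · intro z hz
    by_cases h : ∃ r : {r // r ∈ R}, ((g r : {z // z ∈ Aᶜ}) : X) = z
    · simp only [dif_pos h]; exact hRL h.choose.2
    · simp only [dif_neg h]; exact hl0
  · intro r hr
    refine ⟨((g ⟨r, hr⟩ : {z // z ∈ Aᶜ}) : X), ?_, ?_⟩
    · have h2 := (g ⟨r, hr⟩).2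
      rw [Finset.mem_compl] at h2
      exact h2
    · have hex : ∃ r' : {r // r ∈ R},
          ((g r' : {z // z ∈ Aᶜ}) : X) = ((g ⟨r, hr⟩ : {z // z ∈ Aᶜ}) : X) := ⟨⟨r, hr⟩, rfl⟩
      simp only [dif_pos hex]
      have h3 : g hex.choose = g ⟨r, hr⟩ := Subtype.ext hex.choose_spec
      have h4 := g.injective h3
      exact congrArg Subtype.val h4

lemma dict_family {n : ℕ} (𝒜 : Set (Set (Fin n))) (h0 : ∅ ∈ 𝒜)
    (hdual : ∀ S, S ∈ 𝒜 ↔ Sᶜ ∉ 𝒜)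
    (hsafe : ∀ S₁ S₂ S₃, S₁ ∈ 𝒜 → S₂ ∈ 𝒜 → S₃ ∈ 𝒜 →
      S₁ ∪ S₂ ∪ S₃ = Set.univ → S₁ ∩ S₂ ∩ S₃ = ∅ → False) :
    ∃ d : Fin n, ∀ S, S ∈ 𝒜 ↔ d ∉ S := by
  classical
  have huniv : Set.univ ∉ 𝒜 := by
    have h := (hdual ∅).1 h0
    simpa using h
  have hunion : ∀ S T, S ∈ 𝒜 → T ∈ 𝒜 → S ∪ T ∈ 𝒜 := by
    intro S T hS hT
    by_contra h
    have hc : (S ∪ T)ᶜ ∈ 𝒜 := by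
      by_contra hc
      exact h ((hdual _).2 (by simpa using hc))
    refine hsafe S T ((S ∪ T)ᶜ) hS hT hc ?_ ?_
    · exact Set.union_compl_self _
    · rw [Set.eq_empty_iff_forall_notMem]
      rintro i ⟨⟨hiS, -⟩, hic⟩
      exact hic (Or.inl hiS)
  have hdown : ∀ S T, S ∈ 𝒜 → T ⊆ S → T ∈ 𝒜 := by
    intro S T hS hTS
    by_contra h
    have hTc : Tᶜ ∈ 𝒜 := not_not.mp (fun hc => h ((hdual T).2 hc))
    have hU : S ∪ Tᶜ ∈ 𝒜 := hunion _ _ hS hTc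
    have heq : S ∪ Tᶜ = Set.univ := by
      rw [Set.eq_univ_iff_forall]
      intro i
      by_cases hi : i ∈ T
      · exact Or.inl (hTS hi)
      · exact Or.inr hi
    rw [heq] at hU
    exact huniv hU
  have hd : ∃ d : Fin n, ({d} : Set (Fin n))ᶜ ∈ 𝒜 := by
    by_contra h
    push_neg at h
    have hsing : ∀ d : Fin n, ({d} : Set (Fin n)) ∈ 𝒜 := by
      intro d
      exact (hdual _).2 (by simpa using h d)
    have hF : ∀ F : Finset (Fin n), (↑F : Set (Fin n)) ∈ 𝒜 := by
      intro F
      classical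
      induction F using Finset.induction_on with
      | empty => simpa using h0
      | insert _ _ hx ih =>
        rw [Finset.coe_insert, Set.insert_eq]
        exact hunion _ _ (hsing _) ih
    have hu := hF Finset.univ
    rw [Finset.coe_univ] at hu
    exact huniv hu
  obtain ⟨d, hd⟩ := hd
  refine ⟨d, fun S => ⟨?_, ?_⟩⟩
  · intro hS hdS
    have hU : S ∪ ({d} : Set (Fin n))ᶜ ∈ 𝒜 := hunion _ _ hS hd
    have heq : S ∪ ({d} : Set (Fin n))ᶜ = Set.univ := by
      rw [Set.eq_univ_iff_forall]
      intro i
      by_cases hi : i = d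
      · exact Or.inl (hi ▸ hdS)
      · exact Or.inr (by simpa using hi)
    rw [heq] at hU
    exact huniv hU
  · intro hdS
    refine hdown (({d} : Set (Fin n))ᶜ) S hd ?_
    intro i hi
    simp only [Set.mem_compl_iff, Set.mem_singleton_iff]
    rintro rfl
    exact hdS hi

theorem claim_two
    {n ρ m : ℕ} (hn : 2 ≤ n) (hρ : 2 ≤ ρ) (hm : ρ < m)
    (X P : Type) [Fintype X] [Fintype P]
    (hX : Fintype.card X = m) (hP : Fintype.card P = ρ)
    (α : Profile n X P → Classif X P) (hInd : Independent α)
    (π : Equiv.Perm P) (hGU : ∀ c : Classif X P, (α (fun _ => c)).1 = π ∘ c.1) :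
    ∀ (p : P) (x : X), ∃ d : Fin n,
      ∀ c : Profile n X P, (c d).1 x = p → (α c).1 x = π p := by
  classical
  have hX' : Fintype.card X = m := hX
  have hP' : Fintype.card P = ρ := hP
  -- the agreement lemma
  have i0 : Fin n := ⟨0, by omega⟩
  have hagree : ∀ (c : Profile n X P) (z : X) (r : P),
      (∀ i, (c i).1 z = r) → (α c).1 z = π r := by
    intro c z r h
    have h2 : (α c).1 z = (α (fun _ => c i0)).1 z :=
      hInd z c (fun _ => c i0) (fun i => by rw [h i, h i0])
    rw [h2, hGU (c i0)]
    simp [h i0]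
  have hPne : ∀ b : P, (({b} : Finset P)ᶜ).Nonempty := by
    intro b
    rw [← Finset.card_pos, Finset.card_compl, Finset.card_singleton]
    omega
  have engine : ∀ (A : Finset X) (g : Fin n → X → P) (b : P) (G : Finset P),
      b ∈ G → Gᶜ.card + A.card ≤ Fintype.card X →
      (∀ i, ∀ r ∈ G, ∃ x ∈ A, g i x = r) →
      ∃ c : Profile n X P, (∀ i, ∀ x ∈ A, (c i).1 x = g i x) ∧
        ∃ x ∈ A, (α c).1 x = π b := by
    intro A g b G hbG hcard hcover
    obtain ⟨σ, hσL, hσR⟩ := exists_sigma A (({b} : Finset P)ᶜ) (Gᶜ)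
      (Finset.compl_subset_compl.mpr (Finset.singleton_subset_iff.mpr hbG))
      (hPne b) hcard
    have csurj : ∀ i, Function.Surjective (fun z => if z ∈ A then g i z else σ z) := by
      intro i r
      by_cases hr : r ∈ G
      · obtain ⟨x, hxA, hgx⟩ := hcover i r hr
        exact ⟨x, by simp [hxA, hgx]⟩
      · obtain ⟨z, hzA, hσz⟩ := hσR r (Finset.mem_compl.mpr hr)
        exact ⟨z, by simp [hzA, hσz]⟩
    set c : Profile n X P := fun i => ⟨fun z => if z ∈ A then g i z else σ z, csurj i⟩ with hc
    obtain ⟨x, hx⟩ := (α c).2 (π b)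
    have hxA : x ∈ A := by
      by_contra hxA
      have hval : (α c).1 x = π (σ x) := by
        refine hagree c x (σ x) (fun i => ?_)
        simp [hc, hxA]
      rw [hval] at hx
      have hσb : σ x = b := π.injective hx
      have := hσL x hxA
      rw [hσb] at this
      simp at this
    exact ⟨c, fun i x' hx' => by simp [hc, hx'], x, hxA, hx⟩
  have realize : ∀ (x : X) (u : Fin n → P), ∃ c : Profile n X P,
      ∀ i, (c i).1 x = u i := by
    intro x u
    obtain ⟨σ, hσL, hσR⟩ := exists_sigma ({x} : Finset X) (Finset.univ : Finset P)
      (Finset.univ : Finset P) (le_refl _) ⟨(u i0), Finset.mem_univ _⟩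
      (by rw [Finset.card_univ, Finset.card_singleton]; omega)
    have csurj : ∀ i, Function.Surjective (fun z => if z = x then u i else σ z) := by
      intro i r
      obtain ⟨z, hzA, hσz⟩ := hσR r (Finset.mem_univ r)
      have hzx : z ≠ x := by simpa using hzA
      exact ⟨z, by simp [hzx, hσz]⟩
    exact ⟨fun i => ⟨fun z => if z = x then u i else σ z, csurj i⟩, fun i => by simp⟩
  choose rc hrc using realize
  have fspec : ∀ (x : X) (u : Fin n → P) (c : Profile n X P),
      (∀ i, (c i).1 x = u i) → (α c).1 x = (α (rc x u)).1 x := by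
    intro x u c h
    exact hInd x c (rc x u) (fun i => by rw [h i, hrc x u i])
  have fconst : ∀ (x : X) (r : P), (α (rc x (fun _ => r))).1 x = π r := by
    intro x r
    have h1 := fspec x (fun _ => r) (fun _ => rc x (fun _ => r) i0)
      (fun i => hrc x (fun _ => r) i0)
    rw [← h1, hGU]
    simp [hrc x (fun _ => r) i0]
  have hPnt : Nontrivial P := Fintype.one_lt_card_iff_nontrivial.mp (by omega)
  have hmX : 3 ≤ Fintype.card X := by omega
  have third : ∀ x y : X, ∃ z, z ≠ x ∧ z ≠ y := by
    intro x y
    have hnon : (({x, y} : Finset X)ᶜ).Nonempty := by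
      rw [← Finset.card_pos, Finset.card_compl]
      have h1 : ({x, y} : Finset X).card ≤ 2 :=
        (Finset.card_insert_le _ _).trans (by simp)
      omega
    obtain ⟨z, hz⟩ := hnon
    rw [Finset.mem_compl, Finset.mem_insert, Finset.mem_singleton] at hz
    push_neg at hz
    exact ⟨z, hz⟩
  intro p x
  obtain ⟨q, hq⟩ := exists_ne p
  have hπpq : π p ≠ π q := fun h => hq (π.injective h).symm
  have hGpq : (({p, q} : Finset P)ᶜ).card + 3 ≤ Fintype.card X := by
    have h1 : ({p, q} : Finset P).card = 2 := by
      rw [Finset.card_insert_of_notMem (by simpa using fun h => hq h.symm),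
        Finset.card_singleton]
    rw [Finset.card_compl, h1]
    omega
  set f : X → (Fin n → P) → P := fun x' u => (α (rc x' u)).1 x' with hfdef
  have fspec' : ∀ (x : X) (u : Fin n → P) (c : Profile n X P),
      (∀ i, (c i).1 x = u i) → (α c).1 x = f x u := fspec
  have fconst' : ∀ (x : X) (r : P), f x (fun _ => r) = π r := fconst
  set vec : Set (Fin n) → Fin n → P := fun S i => if i ∈ S then q else p with hvec
  have hstar3 : ∀ (x1 y1 z1 : X), x1 ≠ y1 → x1 ≠ z1 → y1 ≠ z1 →
      ∀ (u v w : Fin n → P) (b : P), b ∈ ({p, q} : Finset P) →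
      (∀ i, u i = p ∨ v i = p ∨ w i = p) → (∀ i, u i = q ∨ v i = q ∨ w i = q) →
      f x1 u = π b ∨ f y1 v = π b ∨ f z1 w = π b := by
    intro x1 y1 z1 hxy hxz hyz u v w b hb hcp hcq
    have hcardA : ({x1, y1, z1} : Finset X).card ≤ 3 :=
      (Finset.card_insert_le _ _).trans (by
        have := Finset.card_insert_le y1 ({z1} : Finset X)
        simp at this ⊢
        omega)
    have hcover : ∀ i, ∀ r ∈ ({p, q} : Finset P), ∃ x' ∈ ({x1, y1, z1} : Finset X),
        (fun i x' => if x' = x1 then u i else if x' = y1 then v i else w i) i x' = r := by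
      intro i r hr
      rw [Finset.mem_insert, Finset.mem_singleton] at hr
      rcases hr with rfl | rfl
      · rcases hcp i with h | h | h
        · exact ⟨x1, by simp, by simp [h]⟩
        · exact ⟨y1, by simp, by simp [Ne.symm hxy, h]⟩
        · exact ⟨z1, by simp, by simp [Ne.symm hxz, Ne.symm hyz, h]⟩
      · rcases hcq i with h | h | h
        · exact ⟨x1, by simp, by simp [h]⟩
        · exact ⟨y1, by simp, by simp [Ne.symm hxy, h]⟩
        · exact ⟨z1, by simp, by simp [Ne.symm hxz, Ne.symm hyz, h]⟩
    obtain ⟨c, hcv, x', hx'A, hx'⟩ := engine ({x1, y1, z1} : Finset X)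
      (fun i x' => if x' = x1 then u i else if x' = y1 then v i else w i) b
      ({p, q} : Finset P) hb (by omega) hcover
    have hgx : ∀ i, (c i).1 x1 = u i := by
      intro i
      rw [hcv i x1 (by simp)]
      simp
    have hgy : ∀ i, (c i).1 y1 = v i := by
      intro i
      rw [hcv i y1 (by simp)]
      simp [Ne.symm hxy]
    have hgz : ∀ i, (c i).1 z1 = w i := by
      intro i
      rw [hcv i z1 (by simp)]
      simp [Ne.symm hxz, Ne.symm hyz]
    rw [Finset.mem_insert, Finset.mem_insert, Finset.mem_singleton] at hx'A
    rcases hx'A with rfl | rfl | rfl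
    · exact Or.inl (by rw [← fspec' x' u c hgx]; exact hx')
    · exact Or.inr (Or.inl (by rw [← fspec' x' v c hgy]; exact hx'))
    · exact Or.inr (Or.inr (by rw [← fspec' x' w c hgz]; exact hx'))
  have hDgen : ∀ (x1 y1 : X), x1 ≠ y1 → ∀ (S : Set (Fin n)) (b : P),
      b ∈ ({p, q} : Finset P) →
      f x1 (vec S) = π b ∨ f y1 (vec Sᶜ) = π b := by
    intro x1 y1 hxy S b hb
    obtain ⟨z1, hz1x, hz1y⟩ := third x1 y1
    have hbb : b = p ∨ b = q := by
      rw [Finset.mem_insert, Finset.mem_singleton] at hb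
      exact hb
    -- third object gets the constant classification with the other value
    obtain ⟨b', hb', hbb'⟩ : ∃ b', b' ∈ ({p, q} : Finset P) ∧ b' ≠ b := by
      rcases hbb with rfl | rfl
      · exact ⟨q, by simp, fun h => hq h⟩
      · exact ⟨p, by simp, fun h => hq h.symm⟩
    have hcovp : ∀ i, vec S i = p ∨ vec Sᶜ i = p ∨ (fun _ : Fin n => b') i = p := by
      intro i
      by_cases hi : i ∈ S
      · exact Or.inr (Or.inl (by simp [hvec, hi]))
      · exact Or.inl (by simp [hvec, hi])
    have hcovq : ∀ i, vec S i = q ∨ vec Sᶜ i = q ∨ (fun _ : Fin n => b') i = q := by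
      intro i
      by_cases hi : i ∈ S
      · exact Or.inl (by simp [hvec, hi])
      · exact Or.inr (Or.inl (by simp [hvec, hi]))
    have h3 := hstar3 x1 y1 z1 hxy (Ne.symm hz1x) (Ne.symm hz1y)
      (vec S) (vec Sᶜ) (fun _ => b') b hb hcovp hcovq
    rcases h3 with h | h | h
    · exact Or.inl h
    · exact Or.inr h
    · exfalso
      rw [fconst' z1 b'] at h
      exact hbb' (π.injective h)
  have hpair : ∀ (x1 y1 : X), x1 ≠ y1 → ∀ S : Set (Fin n),
      (f x1 (vec S) = π p ∧ f y1 (vec Sᶜ) = π q) ∨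
      (f x1 (vec S) = π q ∧ f y1 (vec Sᶜ) = π p) := by
    intro x1 y1 hxy S
    have hDp := hDgen x1 y1 hxy S p (by simp)
    have hDq := hDgen x1 y1 hxy S q (by simp)
    rcases hDp with hDp | hDp <;> rcases hDq with hDq | hDq
    · exact absurd (hDp.symm.trans hDq) hπpq
    · exact Or.inl ⟨hDp, hDq⟩
    · exact Or.inr ⟨hDq, hDp⟩
    · exact absurd (hDp.symm.trans hDq) hπpq
  have hval : ∀ (x1 : X) (S : Set (Fin n)),
      f x1 (vec S) = π p ∨ f x1 (vec S) = π q := by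
    intro x1 S
    obtain ⟨y1, hy1, -⟩ := third x1 x1
    rcases hpair x1 y1 (Ne.symm hy1) S with ⟨h, -⟩ | ⟨h, -⟩
    · exact Or.inl h
    · exact Or.inr h
  have hobj : ∀ (x1 y1 : X) (S : Set (Fin n)), f x1 (vec S) = f y1 (vec S) := by
    intro x1 y1 S
    by_cases hxy : x1 = y1
    · rw [hxy]
    obtain ⟨z1, hz1x, hz1y⟩ := third x1 y1
    have h1 := hpair x1 z1 (Ne.symm hz1x) S
    have h2 := hpair y1 z1 (Ne.symm hz1y) S
    rcases h1 with ⟨ha, hb⟩ | ⟨ha, hb⟩ <;> rcases h2 with ⟨hc, hd⟩ | ⟨hc, hd⟩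
    · rw [ha, hc]
    · exact absurd (hd.symm.trans hb) hπpq
    · exact absurd (hb.symm.trans hd) hπpq
    · rw [ha, hc]
  obtain ⟨d, hdict⟩ := dict_family {S : Set (Fin n) | f x (vec S) = π p}
    (by
      show f x (vec ∅) = π p
      have hv : vec ∅ = fun _ => p := funext fun i => by simp [hvec]
      rw [hv]
      exact fconst' x p)
    (by
      intro S
      obtain ⟨y1, hy1, -⟩ := third x x
      show f x (vec S) = π p ↔ ¬ (f x (vec Sᶜ) = π p)
      rcases hpair x y1 (Ne.symm hy1) S with ⟨h1, h2⟩ | ⟨h1, h2⟩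
      · rw [h1, hobj x y1 Sᶜ, h2]
        exact ⟨fun _ => Ne.symm hπpq, fun _ => rfl⟩
      · rw [h1, hobj x y1 Sᶜ, h2]
        exact ⟨fun h => absurd h (Ne.symm hπpq), fun h => absurd rfl h⟩
    )
    (by
      intro S1 S2 S3 h1 h2 h3 hU hI
      obtain ⟨y1, hy1, -⟩ := third x x
      obtain ⟨z1, hz1x, hz1y⟩ := third x y1
      have hcovq : ∀ i, vec S1 i = q ∨ vec S2 i = q ∨ vec S3 i = q := by
        intro i
        have : i ∈ S1 ∪ S2 ∪ S3 := hU ▸ Set.mem_univ i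
        rcases this with (h | h) | h
        · exact Or.inl (by simp [hvec, h])
        · exact Or.inr (Or.inl (by simp [hvec, h]))
        · exact Or.inr (Or.inr (by simp [hvec, h]))
      have hcovp : ∀ i, vec S1 i = p ∨ vec S2 i = p ∨ vec S3 i = p := by
        intro i
        have hni : i ∉ S1 ∩ S2 ∩ S3 := by rw [hI]; exact Set.notMem_empty i
        by_cases hi1 : i ∈ S1
        · by_cases hi2 : i ∈ S2
          · have hi3 : i ∉ S3 := fun hi3 => hni ⟨⟨hi1, hi2⟩, hi3⟩
            exact Or.inr (Or.inr (by simp [hvec, hi3]))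
          · exact Or.inr (Or.inl (by simp [hvec, hi2]))
        · exact Or.inl (by simp [hvec, hi1])
      have h4 := hstar3 x y1 z1 (Ne.symm hy1) (Ne.symm hz1x) (Ne.symm hz1y)
        (vec S1) (vec S2) (vec S3) q (by simp) hcovp hcovq
      have h1' : f x (vec S1) = π p := h1
      have h2' : f x (vec S2) = π p := h2
      have h3' : f x (vec S3) = π p := h3
      rcases h4 with h | h | h
      · exact hπpq (h1'.symm.trans h)
      · exact hπpq (h2'.symm.trans ((hobj x y1 S2).trans h))
      · exact hπpq (h3'.symm.trans ((hobj x z1 S3).trans h))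
    )
  have hdq : ∀ (x1 : X) (S : Set (Fin n)), d ∈ S → f x1 (vec S) = π q := by
    intro x1 S hdS
    have hne : f x (vec S) ≠ π p := fun h => (hdict S).1 h hdS
    rcases hval x S with h | h
    · exact absurd h hne
    · rw [hobj x1 x S]
      exact h
  refine ⟨d, ?_⟩
  intro c hc
  set u : Fin n → P := fun i => (c i).1 x with hu
  set S : Set (Fin n) := {i | u i = p} with hS
  obtain ⟨y, hy, -⟩ := third x x
  have hcover : ∀ i, ∀ r ∈ ({p} : Finset P), ∃ x' ∈ ({x, y} : Finset X),
      (fun (i : Fin n) x' => if x' = x then u i else vec S i) i x' = r := by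
    intro i r hr
    rw [Finset.mem_singleton] at hr
    by_cases hi : u i = p
    · exact ⟨x, by simp, by simp [hi, hr]⟩
    · refine ⟨y, by simp, ?_⟩
      have hiS : i ∉ S := hi
      simp [hy, hvec, hiS, hr]
  have hcard2 : (({p} : Finset P)ᶜ).card + ({x, y} : Finset X).card ≤ Fintype.card X := by
    have h1 : ({x, y} : Finset X).card ≤ 2 :=
      (Finset.card_insert_le _ _).trans (by simp)
    rw [Finset.card_compl, Finset.card_singleton]
    omega
  obtain ⟨c', hcv, x', hx'A, hx'⟩ := engine ({x, y} : Finset X)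
    (fun (i : Fin n) x' => if x' = x then u i else vec S i) p ({p} : Finset P)
    (by simp) hcard2 hcover
  rw [Finset.mem_insert, Finset.mem_singleton] at hx'A
  have hdS : d ∈ S := hc
  rcases hx'A with rfl | rfl
  · have hgx : ∀ i, (c' i).1 x' = u i := fun i => by
      rw [hcv i x' (by simp)]
      simp
    have h1 : (α c').1 x' = f x' u := fspec' x' u c' hgx
    have hfx : f x' u = π p := by rw [← h1]; exact hx'
    have h2 : (α c).1 x' = f x' u := fspec' x' u c (fun i => rfl)
    rw [h2, hfx]
  · exfalso
    have hgy : ∀ i, (c' i).1 x' = vec S i := fun i => by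
      rw [hcv i x' (by simp)]
      simp [hy]
    have h1 : (α c').1 x' = f x' (vec S) := fspec' x' (vec S) c' hgy
    have h2 : f x' (vec S) = π q := hdq x' S hdS
    rw [h1, h2] at hx'
    exact hπpq hx'.symm
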